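/- Let F: [-1,1]² → ℝ be continuous with pointwise-convergent expansion F = ∑_τ ĉ(τ) P_τ in the bivariate polynomials P_τ(x,y) = (1/2)(L_{τ₁+τ₂}(x)L_{τ₁-τ₂}(y) + L_{τ₁+τ₂}(y)L_{τ₁-τ₂}(x)) indexed by partitions τ=(τ₁,τ₂), τ₁ ≥ τ₂ ≥ 0, such that ĉ(τ) ≥ 0 for all τ ≠ (0,0). Then for any points ξ₊(i,j), ξ₋(i,j) ∈ [-1,1] (1 ≤ i,j ≤ N) for which each moment M_τ = ∑_{i,j} P_τ(ξ₊(i,j), ξ₋(i,j)) is nonnegative and the diagonal values satisfy ξ₊(i,i)=ξ₋(i,i)=1, one has ∑_{i≠j} F(ξ₊(i,j), ξ₋(i,j)) ≥ ĉ(0,0) N² − F(1,1) N. -/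

import Mathlib

/-- The Legendre polynomial `L_n`, via Bonnet's recurrence, as a function on `ℝ`. -/
noncomputable def legendreP : ℕ → ℝ → ℝ
  | 0 => fun _ => 1
  | 1 => fun x => x
  | (n+2) => fun x =>
      ((2*(n:ℝ)+3) * x * legendreP (n+1) x - ((n:ℝ)+1) * legendreP n x) / ((n:ℝ)+2)

/-- The Gegenbauer polynomial `C_n^{3/2}`, via its recurrence, as a function on `ℝ`. -/
noncomputable def gegenbauerC : ℕ → ℝ → ℝ
  | 0 => fun _ => 1
  | 1 => fun x => 3*x
  | (n+2) => fun x =>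
      ((2*(n:ℝ)+5) * x * gegenbauerC (n+1) x - ((n:ℝ)+3) * gegenbauerC n x) / ((n:ℝ)+2)

/-- The generalized Jacobi polynomial `P_τ` on `Gr(2,4)` in the variables `ξ₊, ξ₋`. -/
noncomputable def Pjac (τ₁ τ₂ : ℕ) (x y : ℝ) : ℝ :=
  (legendreP (τ₁+τ₂) x * legendreP (τ₁-τ₂) y
    + legendreP (τ₁+τ₂) y * legendreP (τ₁-τ₂) x) / 2

theorem lp_lower_bound (N : ℕ) (F : ℝ → ℝ → ℝ) (c : ℕ × ℕ → ℝ)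
    (hF : ContinuousOn (fun p : ℝ × ℝ => F p.1 p.2)
      (Set.Icc (-1:ℝ) 1 ×ˢ Set.Icc (-1:ℝ) 1))
    (hexp : ∀ x ∈ Set.Icc (-1:ℝ) 1, ∀ y ∈ Set.Icc (-1:ℝ) 1,
      HasSum (fun τ : {p : ℕ × ℕ // p.2 ≤ p.1} =>
        c τ.1 * Pjac τ.1.1 τ.1.2 x y) (F x y))
    (hc : ∀ τ : ℕ × ℕ, τ.2 ≤ τ.1 → τ ≠ (0,0) → 0 ≤ c τ)
    (ξp ξm : Fin N → Fin N → ℝ)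
    (hmem : ∀ i j, ξp i j ∈ Set.Icc (-1:ℝ) 1 ∧ ξm i j ∈ Set.Icc (-1:ℝ) 1)
    (hM : ∀ τ : ℕ × ℕ, τ.2 ≤ τ.1 →
      0 ≤ ∑ i, ∑ j, Pjac τ.1 τ.2 (ξp i j) (ξm i j))
    (hdiag : ∀ i, ξp i i = 1 ∧ ξm i i = 1) :
    c (0,0) * (N:ℝ)^2 - F 1 1 * N ≤
      ∑ p ∈ Finset.univ.filter (fun p : Fin N × Fin N => p.1 ≠ p.2),
        F (ξp p.1 p.2) (ξm p.1 p.2) := by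
  classical
  set M : ℕ × ℕ → ℝ := fun τ => ∑ i, ∑ j, Pjac τ.1 τ.2 (ξp i j) (ξm i j) with hMdef
  -- total sum over all pairs
  have hsum : HasSum (fun τ : {p : ℕ × ℕ // p.2 ≤ p.1} => c τ.1 * M τ.1)
      (∑ i, ∑ j, F (ξp i j) (ξm i j)) := by
    have h1 : ∀ i : Fin N, HasSum (fun τ : {p : ℕ × ℕ // p.2 ≤ p.1} =>
        ∑ j, c τ.1 * Pjac τ.1.1 τ.1.2 (ξp i j) (ξm i j)) (∑ j, F (ξp i j) (ξm i j)) :=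
      fun i => hasSum_sum fun j _ => hexp _ (hmem i j).1 _ (hmem i j).2
    have h2 := hasSum_sum (fun i (_ : i ∈ (Finset.univ : Finset (Fin N))) => h1 i)
    convert h2 using 2 with τ
    simp [hMdef, Finset.mul_sum]
  have h00 : c (0,0) * M (0,0) ≤ ∑ i, ∑ j, F (ξp i j) (ξm i j) := by
    refine le_hasSum hsum ⟨(0,0), le_refl 0⟩ ?_
    intro τ hτ
    exact mul_nonneg (hc τ.1 τ.2 (fun h => hτ (Subtype.ext h))) (hM τ.1 τ.2)
  have hM00 : M (0,0) = (N:ℝ)^2 := by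
    simp [hMdef, Pjac, legendreP]
    ring
  -- split total sum into diagonal and off-diagonal
  have hsplit : (∑ i, ∑ j, F (ξp i j) (ξm i j)) =
      (∑ p ∈ Finset.univ.filter (fun p : Fin N × Fin N => p.1 ≠ p.2),
        F (ξp p.1 p.2) (ξm p.1 p.2)) + F 1 1 * N := by
    rw [show (∑ i, ∑ j, F (ξp i j) (ξm i j)) = ∑ p : Fin N × Fin N, F (ξp p.1 p.2) (ξm p.1 p.2) from (Fintype.sum_prod_type (f := fun p : Fin N × Fin N => F (ξp p.1 p.2) (ξm p.1 p.2))).symm]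
    rw [← Finset.sum_filter_add_sum_filter_not Finset.univ
        (fun p : Fin N × Fin N => p.1 ≠ p.2)]
    congr 1
    have : ∀ p ∈ Finset.univ.filter (fun p : Fin N × Fin N => ¬ p.1 ≠ p.2),
        F (ξp p.1 p.2) (ξm p.1 p.2) = F 1 1 := by
      intro p hp
      simp only [Finset.mem_filter, not_not] at hp
      rw [← hp.2, (hdiag p.1).1, (hdiag p.1).2]
    rw [Finset.sum_congr rfl this, Finset.sum_const, nsmul_eq_mul, mul_comm]
    congr 1
    have hcard : (Finset.univ.filter (fun p : Fin N × Fin N => ¬ p.1 ≠ p.2)).card = N := by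
      have : (Finset.univ.filter (fun p : Fin N × Fin N => ¬ p.1 ≠ p.2)) =
          Finset.univ.image (fun i : Fin N => (i, i)) := by
        ext p
        simp only [Finset.mem_filter, not_not, Finset.mem_image, Finset.mem_univ, true_and]
        constructor
        · intro h; exact ⟨p.1, Prod.ext rfl h⟩
        · rintro ⟨i, rfl⟩; rfl
      rw [this, Finset.card_image_of_injective _ (fun a b h => (Prod.mk.injEq _ _ _ _).mp h |>.1),
        Finset.card_univ, Fintype.card_fin]
    rw [hcard]
  rw [hM00] at h00
  rw [hsplit] at h00
  linarith
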